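/- For a(t) = t^α with 0 < α ≤ 1, the proper distance from the Fermi observer at proper time τ to the comoving particle at parameter σ₀ satisfies ρ_τ(σ₀) = (τ/(2α))∫₁^{σ₀} σ^{−(1/(2α)+1)}(σ−1)^{−1/2} dσ for all τ > 0 and σ₀ ≥ 1; consequently the Fermi relative speed satisfies the identity v_F(σ₀) = ρ_τ(σ₀)/τ + ((α−1)/(2α·σ₀))∫₁^{σ₀} σ^{−1/(2α)}(σ−1)^{−1/2} dσ. -/

import Mathlib

open Real MeasureTheory Filter Set intervalIntegral

noncomputable section

/-- Synchronous time along the orthogonal spacelike geodesic: t(τ,σ) = b(a(τ)/√σ). -/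
def tF (a b : ℝ → ℝ) (τ σ : ℝ) : ℝ := b (a τ / Real.sqrt σ)

/-- Comoving coordinate along the orthogonal spacelike geodesic:
χ(τ,σ) = (1/2)∫₁^σ ḃ(a(τ)/√s) s^{-1/2}(s-1)^{-1/2} ds. -/
def chiF (a b : ℝ → ℝ) (τ σ : ℝ) : ℝ :=
  (1 / 2) * ∫ s in (1:ℝ)..σ, deriv b (a τ / Real.sqrt s) / (Real.sqrt s * Real.sqrt (s - 1))

/-- Proper arc length along the orthogonal spacelike geodesic:
ρ_τ(σ) = (a(τ)/2)∫₁^σ ḃ(a(τ)/√s) s^{-3/2}(s-1)^{-1/2} ds. -/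
def rhoF (a b : ℝ → ℝ) (τ σ : ℝ) : ℝ :=
  (a τ / 2) *
    ∫ s in (1:ℝ)..σ, deriv b (a τ / Real.sqrt s) / (s * Real.sqrt s * Real.sqrt (s - 1))

/-- The Fermi relative speed of a comoving test particle at parameter σ₀ for a(t) = t^α. -/
def vFpow (α σ₀ : ℝ) : ℝ :=
  (1 / (2 * α)) *
    ((∫ σ in (1:ℝ)..σ₀, σ ^ (-(1 / (2 * α) + 1)) / Real.sqrt (σ - 1)) +
      ((α - 1) / σ₀) * ∫ σ in (1:ℝ)..σ₀, σ ^ (-(1 / (2 * α))) / Real.sqrt (σ - 1))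

/-- for a(t) = t^α, ρ_τ(σ₀) = (τ/(2α))∫₁^{σ₀} σ^{-(1/(2α)+1)}(σ-1)^{-1/2} dσ,
and consequently v_F(σ₀) = ρ_τ(σ₀)/τ + ((α-1)/(2ασ₀))∫₁^{σ₀} σ^{-1/(2α)}(σ-1)^{-1/2} dσ. -/
theorem fermi_distance_and_speed_power_law
    (α : ℝ) (hα0 : 0 < α) (hα1 : α ≤ 1) (τ : ℝ) (hτ : 0 < τ) :
    (∀ σ₀ : ℝ, 1 ≤ σ₀ →
      rhoF (fun t : ℝ => t ^ α) (fun t : ℝ => t ^ (1 / α)) τ σ₀ =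
        (τ / (2 * α)) * ∫ σ in (1:ℝ)..σ₀, σ ^ (-(1 / (2 * α) + 1)) / Real.sqrt (σ - 1)) ∧
    (∀ σ₀ : ℝ, 1 < σ₀ →
      vFpow α σ₀ =
        rhoF (fun t : ℝ => t ^ α) (fun t : ℝ => t ^ (1 / α)) τ σ₀ / τ +
          ((α - 1) / (2 * α * σ₀)) *
            ∫ σ in (1:ℝ)..σ₀, σ ^ (-(1 / (2 * α))) / Real.sqrt (σ - 1)) := by
  have hαne : α ≠ 0 := hα0.ne'
  have hmain : ∀ σ₀ : ℝ, 1 ≤ σ₀ →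
      rhoF (fun t : ℝ => t ^ α) (fun t : ℝ => t ^ (1 / α)) τ σ₀ =
        (τ / (2 * α)) * ∫ σ in (1:ℝ)..σ₀, σ ^ (-(1 / (2 * α) + 1)) / Real.sqrt (σ - 1) := by
    intro σ₀ hσ
    unfold rhoF
    simp only
    have hcong : ∀ s ∈ Set.uIcc (1:ℝ) σ₀,
        deriv (fun t : ℝ => t ^ (1 / α)) (τ ^ α / Real.sqrt s) /
            (s * Real.sqrt s * Real.sqrt (s - 1)) =
          (τ ^ (1 - α) / α) * (s ^ (-(1 / (2 * α) + 1)) / Real.sqrt (s - 1)) := by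
      intro s hs
      rw [Set.uIcc_of_le hσ] at hs
      have hs1 : (1:ℝ) ≤ s := hs.1
      have hs0 : (0:ℝ) < s := lt_of_lt_of_le one_pos hs1
      have hsq : (0:ℝ) < Real.sqrt s := Real.sqrt_pos.2 hs0
      have hx : (0:ℝ) < τ ^ α / Real.sqrt s := div_pos (Real.rpow_pos_of_pos hτ α) hsq
      rw [Real.deriv_rpow_const (τ ^ α / Real.sqrt s) (1 / α)]
      have h1 : (τ ^ α / Real.sqrt s) ^ (1 / α - 1) =
          τ ^ (1 - α) * s ^ ((α - 1) / (2 * α)) := by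
        rw [Real.div_rpow (Real.rpow_pos_of_pos hτ α).le (Real.sqrt_nonneg s),
          ← Real.rpow_mul hτ.le, Real.sqrt_eq_rpow, ← Real.rpow_mul hs0.le]
        rw [show α * (1 / α - 1) = 1 - α by field_simp]
        rw [show (1:ℝ) / 2 * (1 / α - 1) = -((α - 1) / (2 * α)) by field_simp; ring]
        rw [Real.rpow_neg hs0.le]
        field_simp
      have h2 : s * Real.sqrt s = s ^ (3 / 2 : ℝ) := by
        nth_rewrite 1 [show s = s ^ (1:ℝ) by rw [Real.rpow_one]]
        rw [Real.sqrt_eq_rpow, ← Real.rpow_add hs0]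
        norm_num
      rw [h1, h2]
      have h3 : s ^ ((α - 1) / (2 * α)) / s ^ (3 / 2 : ℝ) =
          s ^ (-(1 / (2 * α) + 1)) := by
        rw [← Real.rpow_sub hs0]
        congr 1
        field_simp
        ring
      rw [← h3]
      ring
    rw [intervalIntegral.integral_congr hcong, intervalIntegral.integral_const_mul]
    have hττ : τ ^ α * τ ^ (1 - α) = τ := by
      rw [← Real.rpow_add hτ]; norm_num
    rw [show τ / (2 * α) = (τ ^ α * τ ^ (1 - α)) / (2 * α) by rw [hττ]]
    ring
  refine ⟨hmain, fun σ₀ hσ => ?_⟩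
  rw [hmain σ₀ hσ.le]
  have hσ0 : σ₀ ≠ 0 := by positivity
  unfold vFpow
  field_simp
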